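/- Let R = ℂ[E₁,E₂] with the derivation f determined by f(E₁) = E₁² − 2E₂, f(E₂) = E₁E₂, and δ = 4E₂ − E₁². Then for every integer j ≥ 1 and every natural number r ≥ 0, f^r(δʲ) ≠ 0. -/

import Mathlib

open MvPolynomial

section Aux

private lemma coeff_pderiv_aux (i : Fin 2) (m : Fin 2 →₀ ℕ) (p : MvPolynomial (Fin 2) ℂ) :
    coeff m (pderiv i p) = ((m i : ℂ) + 1) * coeff (m + Finsupp.single i 1) p := by
  induction p using MvPolynomial.induction_on' with
  | monomial s a =>
    rw [pderiv_monomial, coeff_monomial, coeff_monomial]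
    by_cases h : s = m + Finsupp.single i 1
    · subst h
      rw [if_pos (add_tsub_cancel_right (a := m) (b := Finsupp.single i 1)), if_pos rfl]
      simp [Finsupp.add_apply]
      ring
    · have h2 : ¬(s - Finsupp.single i 1 = m ∧ s i ≠ 0) := by
        rintro ⟨h3, h4⟩
        apply h
        ext k
        have := DFunLike.congr_fun h3 k
        rcases eq_or_ne k i with rfl | hk
        · simp [Finsupp.tsub_apply, Finsupp.single_apply] at this ⊢
          omega
        · simp [Finsupp.tsub_apply, Finsupp.single_apply, hk, Ne.symm hk] at this ⊢
          omega
      by_cases h3 : s - Finsupp.single i 1 = m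
      · have h4 : s i = 0 := by by_contra h4; exact h2 ⟨h3, h4⟩
        simp [h3, h, h4]
      · simp [h3, h]
  | add p q hp hq => simp [hp, hq]; ring

private lemma f_apply_aux (f : Derivation ℂ (MvPolynomial (Fin 2) ℂ) (MvPolynomial (Fin 2) ℂ))
    (p : MvPolynomial (Fin 2) ℂ) :
    f p = f (X 0) * pderiv 0 p + f (X 1) * pderiv 1 p := by
  induction p using MvPolynomial.induction_on with
  | C a => simp
  | add p q hp hq => simp [hp, hq]; ring
  | mul_X p i hp =>
    rw [Derivation.leibniz, smul_eq_mul, smul_eq_mul, hp]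
    rw [pderiv_mul, pderiv_mul]
    fin_cases i <;> simp <;> ring

private lemma coeff_X1_mul_aux (n : ℕ) (q : MvPolynomial (Fin 2) ℂ) :
    coeff (Finsupp.single 0 n) (X 1 * q) = 0 := by
  rw [mul_comm, coeff_mul_X']
  simp [Finsupp.single_apply]

private lemma coeff_X0_mul_aux (n : ℕ) (q : MvPolynomial (Fin 2) ℂ) :
    coeff (Finsupp.single 0 (n+1)) (X 0 * q) = coeff (Finsupp.single 0 n) q := by
  rw [mul_comm, coeff_mul_X']
  have h1 : (0 : Fin 2) ∈ (Finsupp.single (0 : Fin 2) (n+1)).support := by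
    simp
  rw [if_pos h1]
  congr 1
  ext k
  simp [Finsupp.tsub_apply, Finsupp.single_apply]

private lemma coeff_X0_mul_zero_aux (q : MvPolynomial (Fin 2) ℂ) :
    coeff (Finsupp.single 0 0) (X 0 * q) = 0 := by
  rw [mul_comm, coeff_mul_X']
  simp

private lemma fpow_delta_aux
    (f : Derivation ℂ (MvPolynomial (Fin 2) ℂ) (MvPolynomial (Fin 2) ℂ))
    (hf1 : f (X 0) = X 0 ^ 2 - 2 * X 1) (hf2 : f (X 1) = X 0 * X 1)
    (δ : MvPolynomial (Fin 2) ℂ) (hδ : δ = 4 * X 1 - X 0 ^ 2)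
    (j : ℕ) (hj : 1 ≤ j) :
    f (δ ^ j) = 2 * (j : MvPolynomial (Fin 2) ℂ) * X 0 * δ ^ j := by
  have h1 : f δ = 2 * X 0 * δ := by
    have h4 : f (4 * X 1) = 4 * f (X 1) := by
      rw [show (4 : MvPolynomial (Fin 2) ℂ) * X 1 = (4:ℕ) • X 1 by simp, map_nsmul]
      simp
    rw [hδ, map_sub, h4, Derivation.leibniz_pow, hf1, hf2]
    simp only [smul_eq_mul, nsmul_eq_mul]
    ring
  rw [Derivation.leibniz_pow, h1]
  obtain ⟨k, rfl⟩ := Nat.exists_eq_add_of_le hj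
  rw [show 1 + k - 1 = k by omega]
  simp only [smul_eq_mul, nsmul_eq_mul]
  ring

end Aux

/-- In `R = ℂ[E₁,E₂]` with the derivation `f` determined by
`f(E₁) = E₁² - 2E₂`, `f(E₂) = E₁E₂`, and `δ = 4E₂ - E₁²`, for every `j ≥ 1` and
every `r : ℕ`, `f^r(δʲ) ≠ 0`. Here `E₁ = X 0`, `E₂ = X 1`. -/
theorem f_iterate_on_delta_powers_ne_zero
    (f : Derivation ℂ (MvPolynomial (Fin 2) ℂ) (MvPolynomial (Fin 2) ℂ))
    (hf1 : f (X 0) = X 0 ^ 2 - 2 * X 1) (hf2 : f (X 1) = X 0 * X 1)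
    (δ : MvPolynomial (Fin 2) ℂ) (hδ : δ = 4 * X 1 - X 0 ^ 2)
    (j r : ℕ) (hj : 1 ≤ j) :
    (f.toLinearMap ^ r) (δ ^ j) ≠ 0 := by
  set c : ℕ → ℂ := fun r => ∏ k ∈ Finset.range r, ((k : ℂ) + 2 * j) with hc
  have hcne : ∀ r, c r ≠ 0 := by
    intro r
    apply Finset.prod_ne_zero_iff.mpr
    intro k _
    have h1 : ((k : ℂ) + 2 * j) = ((k + 2 * j : ℕ) : ℂ) := by push_cast; ring
    rw [h1, Ne, Nat.cast_eq_zero]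
    omega
  have key : ∀ r, ∃ P : MvPolynomial (Fin 2) ℂ,
      (f.toLinearMap ^ r) (δ ^ j) = P * δ ^ j ∧
      coeff (Finsupp.single 0 r) P = c r := by
    intro r
    induction r with
    | zero =>
      refine ⟨1, by simp, ?_⟩
      simp [hc]
    | succ r ih =>
      obtain ⟨P, hP, hcoeff⟩ := ih
      refine ⟨f P + 2 * (j : MvPolynomial (Fin 2) ℂ) * (X 0 * P), ?_, ?_⟩
      · rw [pow_succ', Module.End.mul_apply, hP]
        show f (P * δ ^ j) = _
        rw [Derivation.leibniz, smul_eq_mul, smul_eq_mul,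
          fpow_delta_aux f hf1 hf2 δ hδ j hj]
        ring
      · have hjC : ((j : ℕ) : MvPolynomial (Fin 2) ℂ) = C ((j : ℕ) : ℂ) :=
          (map_natCast C j).symm
        have h2C : (2 : MvPolynomial (Fin 2) ℂ) = C 2 := (map_ofNat C 2).symm
        have hfP : f P + 2 * (j : MvPolynomial (Fin 2) ℂ) * (X 0 * P) =
            X 0 * (X 0 * pderiv 0 P) - C 2 * (X 1 * pderiv 0 P)
              + X 1 * (X 0 * pderiv 1 P) + C (2 * (j : ℂ)) * (X 0 * P) := by
          rw [f_apply_aux f P, hf1, hf2, map_mul, ← h2C, hjC]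
          ring
        rw [hfP, coeff_add, coeff_add, coeff_sub, coeff_C_mul, coeff_C_mul,
          coeff_X1_mul_aux, coeff_X1_mul_aux, coeff_X0_mul_aux]
        cases r with
        | zero =>
          rw [coeff_X0_mul_zero_aux, coeff_X0_mul_aux, hcoeff]
          simp [hc, Finset.prod_range_one]
        | succ k =>
          rw [coeff_X0_mul_aux, coeff_X0_mul_aux, coeff_pderiv_aux, ← Finsupp.single_add,
            Finsupp.single_eq_same, hcoeff]
          rw [hc]
          simp only []
          rw [Finset.prod_range_succ (n := k + 1)]
          push_cast
          ring
  obtain ⟨P, hP, hcoeff⟩ := key r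
  rw [hP]
  have hPne : P ≠ 0 := fun h => hcne r (by rw [← hcoeff, h, coeff_zero])
  have hδne : δ ≠ 0 := by
    intro h
    have := congrArg (eval fun i : Fin 2 => if i = 0 then (0:ℂ) else 1) h
    simp [hδ] at this
  exact mul_ne_zero hPne (pow_ne_zero _ hδne)
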